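/- Let n ≥ 2 be even, and let T be a graph on vertices p_1, …, p_n whose edge set consists of all edges {p_{2i−1}, p_{2i}} for 1 ≤ i ≤ n/2, together with, for each 1 ≤ i ≤ n/2 − 1, exactly one edge e_i joining some vertex of {p_{2i−1}, p_{2i}} to some vertex of {p_{2i+1}, p_{2i+2}}. Then T is a tree (connected and acyclic with n−1 edges), and for every 1 ≤ j ≤ n−1 the graph distance in T between p_j and p_{j+1} is at most 3. -/

import Mathlib

/-- If a Bool-valued function is preserved along edges, it is preserved by reachability. -/
lemma walk_preserve_aux {V : Type*} {G : SimpleGraph V} (f : V → Bool)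
    (h : ∀ u v : V, G.Adj u v → f u = f v) {u v : V} (hr : G.Reachable u v) : f u = f v := by
  obtain ⟨w⟩ := hr
  induction w with
  | nil => rfl
  | cons h' p ih => exact (h _ _ h').trans ih

theorem matching_plus_connectors_is_tree_and_3hop (n : ℕ) (hn : 2 ≤ n) (hne : Even n)
    (T : SimpleGraph (Fin n)) (a b : ℕ → ℕ)
    (hab : ∀ i, i < n / 2 - 1 →
      (a i = 2 * i ∨ a i = 2 * i + 1) ∧ (b i = 2 * i + 2 ∨ b i = 2 * i + 3))
    (hadj : ∀ u v : Fin n, T.Adj u v ↔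
      ((∃ i, i < n / 2 ∧
          (((u : ℕ) = 2 * i ∧ (v : ℕ) = 2 * i + 1) ∨ ((u : ℕ) = 2 * i + 1 ∧ (v : ℕ) = 2 * i))) ∨
       (∃ i, i < n / 2 - 1 ∧
          (((u : ℕ) = a i ∧ (v : ℕ) = b i) ∨ ((u : ℕ) = b i ∧ (v : ℕ) = a i))))) :
    T.IsTree ∧ T.edgeSet.ncard = n - 1 ∧
      ∀ u v : Fin n, (u : ℕ) + 1 = (v : ℕ) → T.dist u v ≤ 3 := by
  obtain ⟨m, hm⟩ := hne
  have hhalf : n / 2 = m := by omega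
  have npos : 0 < n := by omega
  set vk : ℕ → Fin n := fun k => if h : k < n then ⟨k, h⟩ else ⟨0, npos⟩ with hvk
  have vkval : ∀ k, k < n → (vk k : ℕ) = k := by
    intro k h; simp [hvk, h]
  have veq : ∀ k l, k < n → l < n → vk k = vk l → k = l := by
    intro k l hk hl h
    have := congrArg Fin.val h
    rwa [vkval _ hk, vkval _ hl] at this
  have vext : ∀ (x : Fin n) (k : ℕ), (x : ℕ) = k → x = vk k := by
    intro x k h
    have hk : k < n := h ▸ x.isLt
    exact Fin.ext (by rw [vkval _ hk, h])
  -- adjacency helpers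
  have adjM : ∀ (x y : Fin n) (i : ℕ), i < n / 2 → (x : ℕ) = 2 * i → (y : ℕ) = 2 * i + 1 →
      T.Adj x y := by
    intro x y i hi hx hy
    rw [hadj]; exact Or.inl ⟨i, hi, Or.inl ⟨hx, hy⟩⟩
  have adjC : ∀ (x y : Fin n) (i : ℕ), i < n / 2 - 1 → (x : ℕ) = a i → (y : ℕ) = b i →
      T.Adj x y := by
    intro x y i hi hx hy
    rw [hadj]; exact Or.inr ⟨i, hi, Or.inl ⟨hx, hy⟩⟩
  -- connectivity
  have reach0 : ∀ k, k < n → T.Reachable (vk k) (vk 0) := by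
    intro k
    induction k using Nat.strong_induction_on with
    | _ k ih =>
      intro hk
      rcases Nat.lt_or_ge k 2 with h2 | h2
      · rcases (by omega : k = 0 ∨ k = 1) with rfl | rfl
        · exact SimpleGraph.Reachable.refl _
        · exact (adjM (vk 0) (vk 1) 0 (by omega) (vkval _ (by omega)) (vkval _ (by omega))).symm.reachable
      · set j := k / 2 with hj
        have hj1 : 1 ≤ j := by omega
        have hjm : j < n / 2 := by omega
        have hjprev : j - 1 < n / 2 - 1 := by omega
        obtain ⟨ha, hb⟩ := hab (j - 1) hjprev
        have hbval : b (j - 1) = 2 * j ∨ b (j - 1) = 2 * j + 1 := by omega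
        have haval : a (j - 1) < k := by omega
        have han : a (j - 1) < n := by omega
        have hbn : b (j - 1) < n := by omega
        have step1 : T.Reachable (vk k) (vk (b (j - 1))) := by
          rcases hbval with hb' | hb' <;> rcases (by omega : k = 2 * j ∨ k = 2 * j + 1) with hk' | hk'
          · rw [show k = b (j-1) by omega]
          · exact (adjM (vk (b (j-1))) (vk k) j hjm (by rw [vkval _ hbn, hb'])
              (by rw [vkval _ hk, hk'])).symm.reachable
          · exact (adjM (vk k) (vk (b (j-1))) j hjm (by rw [vkval _ hk, hk'])
              (by rw [vkval _ hbn, hb'])).reachable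
          · rw [show k = b (j-1) by omega]
        have step2 : T.Reachable (vk (b (j - 1))) (vk (a (j - 1))) :=
          (adjC (vk (a (j-1))) (vk (b (j-1))) (j-1) hjprev (vkval _ han) (vkval _ hbn)).symm.reachable
        exact step1.trans (step2.trans (ih _ haval han))
  have hconn : T.Connected := by
    rw [SimpleGraph.connected_iff]
    refine ⟨fun u v => ?_, ⟨⟨0, npos⟩⟩⟩
    have hu : T.Reachable u (vk 0) := (vext u u.val rfl) ▸ reach0 u.val u.isLt
    have hv : T.Reachable v (vk 0) := (vext v v.val rfl) ▸ reach0 v.val v.isLt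
    exact hu.trans hv.symm
  -- generic cut argument
  have cut : ∀ (f : Fin n → Bool) (u v : Fin n),
      (∀ x y : Fin n, (T \ SimpleGraph.fromEdgeSet {s(u,v)}).Adj x y → f x = f y) →
      f u ≠ f v → ¬ (T \ SimpleGraph.fromEdgeSet {s(u,v)}).Reachable u v := by
    intro f u v hpres hfne hr
    exact hfne (walk_preserve_aux f hpres hr)
  -- extracting info from adjacency in the deleted graph
  have delAdj : ∀ (u v x y : Fin n), (T \ SimpleGraph.fromEdgeSet {s(u,v)}).Adj x y →
      T.Adj x y ∧ s(x,y) ≠ s(u,v) := by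
    intro u v x y h
    rw [SimpleGraph.sdiff_adj, SimpleGraph.fromEdgeSet_adj] at h
    obtain ⟨hT, hno⟩ := h
    refine ⟨hT, fun hc => hno ⟨by simpa using hc, hT.ne⟩⟩
  -- bridge for a matching edge
  have bridgeM : ∀ (i : ℕ), i < n / 2 → ∀ u v : Fin n, (u : ℕ) = 2 * i → (v : ℕ) = 2 * i + 1 →
      ¬ (T \ SimpleGraph.fromEdgeSet {s(u,v)}).Reachable u v := by
    intro i hi u v hu hv
    set f : Fin n → Bool := fun x =>
      if (x : ℕ) / 2 < i then decide (b (i-1) = 2 * i)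
      else if i < (x : ℕ) / 2 then decide (a i = 2 * i)
      else decide ((x : ℕ) = 2 * i) with hf
    apply cut f u v
    · intro x y hxy
      obtain ⟨hT, hne'⟩ := delAdj u v x y hxy
      rw [hadj] at hT
      rcases hT with ⟨j, hj, hc⟩ | ⟨j, hj, hc⟩
      · -- matching edge j
        have key : ∀ x y : Fin n, (x : ℕ) = 2 * j → (y : ℕ) = 2 * j + 1 →
            s(x,y) ≠ s(u,v) → f x = f y := by
          intro x y hx hy hne''
          have hji : j ≠ i := by
            intro h; subst h
            exact hne'' (by rw [show x = u from Fin.ext (by omega), show y = v from Fin.ext (by omega)])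
          simp only [hf]
          rw [show (x:ℕ)/2 = j by omega, show (y:ℕ)/2 = j by omega]
          split_ifs <;> first | rfl | omega | (exfalso; omega)
        rcases hc with ⟨hx, hy⟩ | ⟨hx, hy⟩
        · exact key x y hx hy hne'
        · exact (key y x hy hx (by rwa [Sym2.eq_swap])).symm
      · -- connector edge j
        obtain ⟨haj, hbj⟩ := hab j hj
        have key : ∀ x y : Fin n, (x : ℕ) = a j → (y : ℕ) = b j → f x = f y := by
          intro x y hx hy
          have hxb : (x:ℕ)/2 = j := by omega
          have hyb : (y:ℕ)/2 = j + 1 := by omega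
          simp only [hf]
          rw [hxb, hyb]
          split_ifs <;>
            first
              | rfl
              | (exfalso; omega)
              | (rw [show i - 1 = j from by omega, ← hy])
              | (rw [show j = i from by omega] at hx hy
                 exact decide_eq_decide.mpr (by omega))
        rcases hc with ⟨hx, hy⟩ | ⟨hx, hy⟩
        · exact key x y hx hy
        · exact (key y x hy hx).symm
    · intro hcon
      simp only [hf] at hcon
      rw [show (u:ℕ)/2 = i by omega, show (v:ℕ)/2 = i by omega,
        if_neg (lt_irrefl i), if_neg (lt_irrefl i), if_neg (lt_irrefl i),
        if_neg (lt_irrefl i), decide_eq_decide] at hcon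
      omega
  -- bridge for a connector edge
  have bridgeC : ∀ (i : ℕ), i < n / 2 - 1 → ∀ u v : Fin n, (u : ℕ) = a i → (v : ℕ) = b i →
      ¬ (T \ SimpleGraph.fromEdgeSet {s(u,v)}).Reachable u v := by
    intro i hi u v hu hv
    obtain ⟨hai, hbi⟩ := hab i hi
    set f : Fin n → Bool := fun x => decide ((x : ℕ) / 2 ≤ i) with hf
    apply cut f u v
    · intro x y hxy
      obtain ⟨hT, hne'⟩ := delAdj u v x y hxy
      rw [hadj] at hT
      rcases hT with ⟨j, hj, hc⟩ | ⟨j, hj, hc⟩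
      · rcases hc with ⟨hx, hy⟩ | ⟨hx, hy⟩ <;>
          (simp only [hf]; exact decide_eq_decide.mpr (by omega))
      · obtain ⟨haj, hbj⟩ := hab j hj
        have hji : j ≠ i := by
          intro h; subst h
          rcases hc with ⟨hx, hy⟩ | ⟨hx, hy⟩
          · exact hne' (by rw [show x = u from Fin.ext (by omega), show y = v from Fin.ext (by omega)])
          · exact hne' (by rw [show x = v from Fin.ext (by omega), show y = u from Fin.ext (by omega),
              Sym2.eq_swap])
        rcases hc with ⟨hx, hy⟩ | ⟨hx, hy⟩ <;>
          (simp only [hf]; exact decide_eq_decide.mpr (by omega))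
    · intro hcon
      simp only [hf, decide_eq_decide] at hcon
      omega
  have hacyc : T.IsAcyclic := by
    rw [SimpleGraph.isAcyclic_iff_forall_adj_isBridge]
    intro u v huv
    rw [SimpleGraph.isBridge_iff]
    have hT := (hadj u v).mp huv
    rcases hT with ⟨i, hi, hc⟩ | ⟨i, hi, hc⟩
    · rcases hc with ⟨hu, hv⟩ | ⟨hu, hv⟩
      · exact bridgeM i hi u v hu hv
      · intro hr
        exact bridgeM i hi v u hv hu (by rwa [Sym2.eq_swap, SimpleGraph.reachable_comm] at hr)
    · rcases hc with ⟨hu, hv⟩ | ⟨hu, hv⟩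
      · exact bridgeC i hi u v hu hv
      · intro hr
        exact bridgeC i hi v u hv hu (by rwa [Sym2.eq_swap, SimpleGraph.reachable_comm] at hr)
  -- edge count
  set g : ℕ → Sym2 (Fin n) := fun i =>
    if i < n / 2 then s(vk (2*i), vk (2*i+1)) else s(vk (a (i - n/2)), vk (b (i - n/2))) with hg
  set F : Finset (Sym2 (Fin n)) := (Finset.range (n-1)).image g with hF
  have hgmem : ∀ i, i < n - 1 → g i ∈ T.edgeSet := by
    intro i hi
    simp only [hg]
    split_ifs with h
    · exact adjM _ _ i h (vkval _ (by omega)) (vkval _ (by omega))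
    · have hi' : i - n/2 < n/2 - 1 := by omega
      obtain ⟨ha', hb'⟩ := hab _ hi'
      exact adjC _ _ (i - n/2) hi' (vkval _ (by omega)) (vkval _ (by omega))
  have hES : T.edgeSet = ↑F := by
    ext e
    induction e using Sym2.ind with
    | _ u v =>
      simp only [SimpleGraph.mem_edgeSet, hF, Finset.coe_image, Set.mem_image, Finset.mem_coe,
        Finset.mem_range]
      constructor
      · intro h
        rw [hadj] at h
        rcases h with ⟨i, hi, hc⟩ | ⟨i, hi, hc⟩
        · refine ⟨i, by omega, ?_⟩
          simp only [hg]
          rw [if_pos hi]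
          rcases hc with ⟨hu, hv⟩ | ⟨hu, hv⟩
          · rw [← vext u _ hu, ← vext v _ hv]
          · rw [← vext u _ hu, ← vext v _ hv, Sym2.eq_swap]
        · obtain ⟨ha', hb'⟩ := hab i hi
          refine ⟨n/2 + i, by omega, ?_⟩
          simp only [hg]
          rw [if_neg (by omega), Nat.add_sub_cancel_left]
          rcases hc with ⟨hu, hv⟩ | ⟨hu, hv⟩
          · rw [← vext u _ hu, ← vext v _ hv]
          · rw [← vext u _ hu, ← vext v _ hv, Sym2.eq_swap]
      · rintro ⟨i, hi, hgi⟩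
        have := hgmem i hi
        rw [hgi] at this
        exact this
  have hinj : Set.InjOn g (Finset.range (n-1)) := by
    intro i hi j hj hij
    simp only [Finset.coe_range, Set.mem_Iio] at hi hj
    simp only [hg] at hij
    split_ifs at hij with h1 h2 h2
    · rw [Sym2.eq_iff] at hij
      rcases hij with ⟨e1, e2⟩ | ⟨e1, e2⟩ <;>
        [skip; skip] <;>
        · have := veq _ _ (by omega) (by omega) e1
          have := veq _ _ (by omega) (by omega) e2
          omega
    · exfalso
      have hj' : j - n/2 < n/2 - 1 := by omega
      obtain ⟨ha', hb'⟩ := hab _ hj'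
      rw [Sym2.eq_iff] at hij
      rcases hij with ⟨e1, e2⟩ | ⟨e1, e2⟩ <;>
        · have := veq _ _ (by omega) (by omega) e1
          have := veq _ _ (by omega) (by omega) e2
          omega
    · exfalso
      have hi' : i - n/2 < n/2 - 1 := by omega
      obtain ⟨ha', hb'⟩ := hab _ hi'
      rw [Sym2.eq_iff] at hij
      rcases hij with ⟨e1, e2⟩ | ⟨e1, e2⟩ <;>
        · have := veq _ _ (by omega) (by omega) e1
          have := veq _ _ (by omega) (by omega) e2
          omega
    · have hi' : i - n/2 < n/2 - 1 := by omega
      have hj' : j - n/2 < n/2 - 1 := by omega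
      obtain ⟨ha1, hb1⟩ := hab _ hi'
      obtain ⟨ha2, hb2⟩ := hab _ hj'
      rw [Sym2.eq_iff] at hij
      rcases hij with ⟨e1, e2⟩ | ⟨e1, e2⟩ <;>
        · have := veq _ _ (by omega) (by omega) e1
          have := veq _ _ (by omega) (by omega) e2
          omega
  have hcard : T.edgeSet.ncard = n - 1 := by
    rw [hES, Set.ncard_coe_finset, hF, Finset.card_image_of_injOn hinj, Finset.card_range]
  -- distances
  have hdist : ∀ u v : Fin n, (u : ℕ) + 1 = (v : ℕ) → T.dist u v ≤ 3 := by
    intro u v huv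
    have hv : (v : ℕ) < n := v.isLt
    rcases Nat.even_or_odd (u : ℕ) with ⟨i, hi⟩ | ⟨i, hi⟩
    · -- u = 2i, v = 2i+1, adjacent
      have h : T.Adj u v := adjM u v i (by omega) (by omega) (by omega)
      calc T.dist u v ≤ (h.toWalk).length := SimpleGraph.dist_le _
        _ ≤ 3 := by simp
    · -- u = 2i+1, v = 2i+2
      have hi2 : i < n / 2 - 1 := by omega
      obtain ⟨ha', hb'⟩ := hab i hi2
      rcases ha' with ha' | ha' <;> rcases hb' with hb' | hb'
      · -- a = 2i, b = 2i+2 : u -> vk(2i) -> v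
        have h1 : T.Adj u (vk (2*i)) :=
          (adjM (vk (2*i)) u i (by omega) (vkval _ (by omega)) (by omega)).symm
        have h2 : T.Adj (vk (2*i)) v :=
          adjC _ _ i hi2 (by rw [vkval _ (by omega), ha']) (by omega)
        calc T.dist u v ≤ (SimpleGraph.Walk.cons h1 h2.toWalk).length := SimpleGraph.dist_le _
          _ ≤ 3 := by simp
      · -- a = 2i, b = 2i+3 : u -> vk(2i) -> vk(2i+3) -> v
        have h1 : T.Adj u (vk (2*i)) :=
          (adjM (vk (2*i)) u i (by omega) (vkval _ (by omega)) (by omega)).symm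
        have h2 : T.Adj (vk (2*i)) (vk (2*i+3)) :=
          adjC _ _ i hi2 (by rw [vkval _ (by omega), ha']) (by rw [vkval _ (by omega), hb'])
        have h3 : T.Adj (vk (2*i+3)) v :=
          (adjM v (vk (2*i+3)) (i+1) (by omega) (by omega) (by rw [vkval _ (by omega)]; ring)).symm
        calc T.dist u v ≤ (SimpleGraph.Walk.cons h1 (SimpleGraph.Walk.cons h2 h3.toWalk)).length :=
              SimpleGraph.dist_le _
          _ ≤ 3 := by simp
      · -- a = 2i+1, b = 2i+2 : u -> v
        have h1 : T.Adj u v := adjC u v i hi2 (by omega) (by omega)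
        calc T.dist u v ≤ (h1.toWalk).length := SimpleGraph.dist_le _
          _ ≤ 3 := by simp
      · -- a = 2i+1, b = 2i+3 : u -> vk(2i+3) -> v
        have h1 : T.Adj u (vk (2*i+3)) :=
          adjC _ _ i hi2 (by omega) (by rw [vkval _ (by omega), hb'])
        have h2 : T.Adj (vk (2*i+3)) v :=
          (adjM v (vk (2*i+3)) (i+1) (by omega) (by omega) (by rw [vkval _ (by omega)]; ring)).symm
        calc T.dist u v ≤ (SimpleGraph.Walk.cons h1 h2.toWalk).length := SimpleGraph.dist_le _
          _ ≤ 3 := by simp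
  exact ⟨⟨hconn, hacyc⟩, hcard, hdist⟩
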